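/- Let (E, L) be a labeled graph and c : E^1 → G label consistent with c = C ∘ L. For β ∈ L^+(E) and g ∈ G, under the identification of labeled paths of (E ×_c G, L_1) with L^+(E) × G, the range set of the labeled path (β, g) equals { (r(μ), g C(β)) : μ ∈ E^+, L(μ) = β } = r(β) × { g C(β) }. -/

import Mathlib

structure DirGraph (V E : Type*) where
  r : E → V
  s : E → V

def IsPath {V E : Type*} (G : DirGraph V E) (l : List E) : Prop :=
  l ≠ [] ∧ List.Chain' (fun e f => G.r e = G.s f) l

def IsLabeledPath {V E Λ : Type*} (G : DirGraph V E) (ℒ : E → Λ) (β : List Λ) : Prop :=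
  ∃ l, IsPath G l ∧ l.map ℒ = β

def relRange {V E Λ : Type*} (G : DirGraph V E) (ℒ : E → Λ) (S : Set V) (β : List Λ) :
    Set V :=
  { v | ∃ l, IsPath G l ∧ l.map ℒ = β ∧ (∃ e ∈ l.head?, G.s e ∈ S) ∧
      ∃ e ∈ l.getLast?, G.r e = v }

def skewGraph {V E Γ : Type*} [Group Γ] (G : DirGraph V E) (c : E → Γ) :
    DirGraph (V × Γ) (E × Γ) where
  r p := (G.r p.1, p.2 * c p.1)
  s p := (G.s p.1, p.2)

def skewLabel {E Λ Γ : Type*} [Group Γ] (ℒ : E → Λ) (d : E → Γ) : E × Γ → Λ × Γ :=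
  fun p => (ℒ p.1, p.2 * d p.1)

/-- The word in `(Λ × Γ)^+` corresponding to `(β, g)` under the identification of
labeled paths of `(E ×_c Γ, ℒ_𝟏)` with `ℒ⁺(E) × Γ`. -/
def skewWord {Λ Γ : Type*} [Group Γ] (C : Λ → Γ) : List Λ → Γ → List (Λ × Γ)
  | [], _ => []
  | a :: rest, g => (a, g) :: skewWord C rest (g * C a)

section aux
variable {V E Λ Γ : Type*} [Group Γ]

def liftL (c : E → Γ) : List E → Γ → List (E × Γ)
  | [], _ => []
  | e :: rest, g => (e, g) :: liftL c rest (g * c e)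

lemma liftL_map_fst (c : E → Γ) : ∀ (l : List E) (g : Γ), (liftL c l g).map Prod.fst = l
  | [], _ => rfl
  | e :: rest, g => by simp [liftL, liftL_map_fst c rest]

lemma liftL_ne_nil (c : E → Γ) (l : List E) (g : Γ) (h : l ≠ []) : liftL c l g ≠ [] := by
  cases l with
  | nil => exact absurd rfl h
  | cons e rest => simp [liftL]

lemma liftL_map_label (ℒ : E → Λ) (c : E → Γ) (C : Λ → Γ) (hc : c = C ∘ ℒ) :
    ∀ (l : List E) (g : Γ),
      (liftL c l g).map (skewLabel ℒ fun _ => (1 : Γ)) = skewWord C (l.map ℒ) g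
  | [], _ => rfl
  | e :: rest, g => by
    have ih := liftL_map_label ℒ c C hc rest (g * c e)
    simp only [liftL, List.map_cons, skewWord, skewLabel, mul_one]
    rw [ih, hc]
    rfl

lemma liftL_chain' (G : DirGraph V E) (c : E → Γ) :
    ∀ (l : List E) (g : Γ), List.Chain' (fun e f => G.r e = G.s f) l →
      List.Chain' (fun p q => (skewGraph G c).r p = (skewGraph G c).s q) (liftL c l g)
  | [], _, _ => List.isChain_nil
  | [e], g, _ => List.isChain_singleton _
  | e :: f :: rest, g, h => by
    rw [List.Chain', List.isChain_cons_cons] at h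
    simp only [liftL]
    rw [List.Chain', List.isChain_cons_cons]
    constructor
    · simp [skewGraph, h.1]
    · have := liftL_chain' G c (f :: rest) (g * c e) h.2
      simpa [liftL, List.Chain'] using this

lemma liftL_last (G : DirGraph V E) (c : E → Γ) :
    ∀ (l : List E) (g : Γ),
      (liftL c l g).getLast?.map (skewGraph G c).r
        = l.getLast?.map (fun e => (G.r e, g * (l.map c).prod))
  | [], _ => rfl
  | [e], g => by simp [liftL, skewGraph]
  | e :: f :: rest, g => by
    have ih := liftL_last G c (f :: rest) (g * c e)
    simp only [liftL] at ih ⊢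
    rw [List.getLast?_cons_cons, List.getLast?_cons_cons, ih]
    simp [mul_assoc]

lemma word_eq (ℒ : E → Λ) (c : E → Γ) (C : Λ → Γ) (hc : c = C ∘ ℒ) :
    ∀ (m : List (E × Γ)) (β : List Λ) (g : Γ),
      m.map (skewLabel ℒ fun _ => (1 : Γ)) = skewWord C β g →
      m = liftL c (m.map Prod.fst) g ∧ (m.map Prod.fst).map ℒ = β
  | [], β, g, h => by
    cases β with
    | nil => exact ⟨rfl, rfl⟩
    | cons a β' => simp [skewWord] at h
  | p :: m', β, g, h => by
    obtain ⟨p1, p2⟩ := p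
    cases β with
    | nil => simp [skewWord] at h
    | cons a β' =>
      simp only [List.map_cons, skewWord, skewLabel, List.cons.injEq, Prod.mk.injEq,
        mul_one] at h
      obtain ⟨⟨h1, h2⟩, h3⟩ := h
      subst h1; subst h2
      obtain ⟨ih1, ih2⟩ := word_eq ℒ c C hc m' β' _ h3
      refine ⟨?_, by simp [ih2]⟩
      simp only [List.map_cons, liftL, hc, Function.comp_apply] at ih1 ⊢
      rw [← ih1]
  termination_by m => m.length

end aux

lemma map_c_eq (ℒ : E → Λ) (c : E → Γ) (C : Λ → Γ) (hc : c = C ∘ ℒ)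
    (l : List E) (β : List Λ) (hl : l.map ℒ = β) : l.map c = β.map C := by
  rw [hc, ← hl, List.map_map]


/-- For label consistent `c = C ∘ ℒ`, the range set of the labeled path `(β, g)` of
`(E ×_c Γ, ℒ_𝟏)` equals `r(β) × {g C(β)}`. -/
theorem stmt10 {V E Λ Γ : Type*} [Group Γ] (G : DirGraph V E) (ℒ : E → Λ)
    (c : E → Γ) (C : Λ → Γ) (hc : c = C ∘ ℒ)
    (β : List Λ) (hβ : IsLabeledPath G ℒ β) (g : Γ) :
    relRange (skewGraph G c) (skewLabel ℒ fun _ => (1 : Γ)) Set.univ (skewWord C β g) =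
      (relRange G ℒ Set.univ β) ×ˢ ({g * (β.map C).prod} : Set Γ) := by
  ext ⟨v1, v2⟩
  simp only [Set.mem_prod, Set.mem_singleton_iff]
  constructor
  · rintro ⟨m, ⟨hm0, hmch⟩, hml, -, e, he, hre⟩
    obtain ⟨hm, hl⟩ := word_eq ℒ c C hc m β g hml
    set l := m.map Prod.fst with hldef
    have hl0 : l ≠ [] := by simpa [hldef] using hm0
    have hch : List.Chain' (fun e f => G.r e = G.s f) l := by
      rw [hldef, List.Chain', List.isChain_map]
      exact hmch.imp (fun a b h => congrArg Prod.fst h)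
    have hlast := liftL_last G c l g
    rw [← hm] at hlast
    rw [Option.mem_def] at he
    rw [he, Option.map_some] at hlast
    obtain ⟨e', he', hve⟩ := (Option.map_eq_some_iff.mp hlast.symm)
    rw [hre] at hve
    have hprod : l.map c = β.map C := map_c_eq ℒ c C hc l β hl
    have hv1 : v1 = G.r e' := by
      have := congrArg Prod.fst hve; simpa using this.symm
    have hv2 : v2 = g * (β.map C).prod := by
      have := congrArg Prod.snd hve; rw [hprod] at this; simpa using this.symm
    refine ⟨⟨l, ⟨hl0, hch⟩, hl, ?_, e', he', hv1.symm⟩, hv2⟩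
    exact ⟨l.head hl0, List.head?_eq_head _, trivial⟩
  · rintro ⟨⟨l, ⟨hl0, hch⟩, hlL, -, e', he', hr⟩, hv2⟩
    refine ⟨liftL c l g, ⟨liftL_ne_nil c l g hl0, liftL_chain' G c l g hch⟩, ?_, ?_, ?_⟩
    · rw [liftL_map_label ℒ c C hc l g, hlL]
    · exact ⟨(liftL c l g).head (liftL_ne_nil c l g hl0),
        List.head?_eq_head _, trivial⟩
    · have hlast := liftL_last G c l g
      rw [Option.mem_def] at he'
      rw [he', Option.map_some] at hlast
      obtain ⟨a, ha, hva⟩ := Option.map_eq_some_iff.mp hlast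
      refine ⟨a, ha, ?_⟩
      rw [hva, hr, map_c_eq ℒ c C hc l β hlL, ← hv2]
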